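/- Let p* be the minimal Walrasian price vector in a market with strong gross substitutes valuations, let q be any packing price vector, and let (z_1,…,z_n) be a packing allocation with respect to q. Then p*(e) ≤ q(e) for every item e with Σ_i z_i(e) > 0. -/

import Mathlib

open Finset

variable {E : Type*} [Fintype E] [DecidableEq E]

/-- Characteristic (unit) vector of an item. -/
def chi (e : E) : E → ℤ := fun f => if f = e then 1 else 0

/-- The integer box `[0, b]_ℤ` of bundles. -/
def Box (b : E → ℤ) : Set (E → ℤ) := {z | ∀ e, 0 ≤ z e ∧ z e ≤ b e}

/-- Quasi-linear utility of a bundle at prices `p`. -/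
noncomputable def util (v : (E → ℤ) → ℤ) (p : E → ℝ) (z : E → ℤ) : ℝ :=
  (v z : ℝ) - ∑ e : E, p e * (z e : ℝ)

/-- Demand set: utility-maximizing bundles in the box. -/
def Demand (b : E → ℤ) (v : (E → ℤ) → ℤ) (p : E → ℝ) : Set (E → ℤ) :=
  {z | z ∈ Box b ∧ ∀ y ∈ Box b, util v p y ≤ util v p z}

/-- Componentwise minimal preferred bundles. -/
def MinDemand (b : E → ℤ) (v : (E → ℤ) → ℤ) (p : E → ℝ) : Set (E → ℤ) :=
  {z | z ∈ Demand b v p ∧ ∀ y ∈ Demand b v p, y ≤ z → y = z}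

/-- Componentwise maximal preferred bundles. -/
def MaxDemand (b : E → ℤ) (v : (E → ℤ) → ℤ) (p : E → ℝ) : Set (E → ℤ) :=
  {z | z ∈ Demand b v p ∧ ∀ y ∈ Demand b v p, z ≤ y → y = z}

/-- M♮-concavity, equivalent to the strong gross substitutes property. -/
def MNatConcave (b : E → ℤ) (v : (E → ℤ) → ℤ) : Prop :=
  ∀ x ∈ Box b, ∀ y ∈ Box b, ∀ e : E, y e < x e →
    v x + v y ≤ v (x - chi e) + v (y + chi e) ∨
    ∃ f : E, x f < y f ∧ v x + v y ≤ v (x - chi e + chi f) + v (y + chi e - chi f)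

/-- M-convex set: exchange property. -/
def MConvex (B : Set (E → ℤ)) : Prop :=
  ∀ x ∈ B, ∀ y ∈ B, ∀ e : E, y e < x e →
    ∃ f : E, x f < y f ∧ x - chi e + chi f ∈ B ∧ y + chi e - chi f ∈ B

/-- `ρ` is the rank function of `B`: `ρ S = max {z(S) : z ∈ B}`. -/
def IsRank (B : Set (E → ℤ)) (ρ : Finset E → ℤ) : Prop :=
  ∀ S : Finset E, IsGreatest ((fun z : E → ℤ => ∑ e ∈ S, z e) '' B) (ρ S)

/-- Prices `p` are packing: a choice of preferred bundles oversells no item. -/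
def Packing {N : Type*} [Fintype N] (b : E → ℤ) (v : N → (E → ℤ) → ℤ) (p : E → ℝ) : Prop :=
  ∃ z : N → E → ℤ, (∀ i, z i ∈ Demand b (v i) p) ∧ ∀ e, ∑ i, z i e ≤ b e

/-- Prices `p` are covering: a choice of preferred bundles sells all items. -/
def Covering {N : Type*} [Fintype N] (b : E → ℤ) (v : N → (E → ℤ) → ℤ) (p : E → ℝ) : Prop :=
  ∃ z : N → E → ℤ, (∀ i, z i ∈ Demand b (v i) p) ∧ ∀ e, b e ≤ ∑ i, z i e

/-- Prices `p` are Walrasian: a choice of preferred bundles exactly exhausts the supply. -/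
def Walrasian {N : Type*} [Fintype N] (b : E → ℤ) (v : N → (E → ℤ) → ℤ) (p : E → ℝ) : Prop :=
  ∃ z : N → E → ℤ, (∀ i, z i ∈ Demand b (v i) p) ∧ ∀ e, ∑ i, z i e = b e


namespace SW15
set_option linter.unusedSectionVars false
set_option maxHeartbeats 1000000

variable {E : Type*} [Fintype E] [DecidableEq E]

/-- price of a bundle -/
noncomputable def priceOf (p : E → ℝ) (y : E → ℤ) : ℝ := ∑ e : E, p e * (y e : ℝ)

lemma util_eq (v : (E → ℤ) → ℤ) (p : E → ℝ) (y : E → ℤ) :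
    util v p y = (v y : ℝ) - priceOf p y := rfl

lemma priceOf_add (p : E → ℝ) (y w : E → ℤ) :
    priceOf p (y + w) = priceOf p y + priceOf p w := by
  unfold priceOf
  rw [← Finset.sum_add_distrib]
  refine Finset.sum_congr rfl fun e _ => ?_
  push_cast [Pi.add_apply]
  ring

lemma priceOf_sub (p : E → ℝ) (y w : E → ℤ) :
    priceOf p (y - w) = priceOf p y - priceOf p w := by
  unfold priceOf
  rw [← Finset.sum_sub_distrib]
  refine Finset.sum_congr rfl fun e _ => ?_
  push_cast [Pi.sub_apply]
  ring

lemma priceOf_chi (p : E → ℝ) (f : E) : priceOf p (chi f) = p f := by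
  unfold priceOf chi
  simp [mul_ite]

/-- the finite box -/
noncomputable def boxF (b : E → ℤ) : Finset (E → ℤ) := Fintype.piFinset fun e => Finset.Icc 0 (b e)

lemma mem_boxF {b z : E → ℤ} : z ∈ boxF b ↔ z ∈ Box b := by
  simp [boxF, Box, Fintype.mem_piFinset, Finset.mem_Icc]

lemma boxF_nonempty {b : E → ℤ} (hb : 0 ≤ b) : (boxF b).Nonempty :=
  ⟨0, mem_boxF.2 fun e => ⟨le_refl _, hb e⟩⟩

noncomputable def Vr (b : E → ℤ) (v : (E → ℤ) → ℤ) (p : E → ℝ) : ℝ :=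
  if h : (boxF b).Nonempty then (boxF b).sup' h (util v p) else 0

lemma util_le_Vr {b : E → ℤ} (hb : 0 ≤ b) (v : (E → ℤ) → ℤ) (p : E → ℝ)
    {y : E → ℤ} (hy : y ∈ Box b) : util v p y ≤ Vr b v p := by
  rw [Vr, dif_pos (boxF_nonempty hb)]
  exact Finset.le_sup' _ (mem_boxF.2 hy)

lemma exists_util_eq_Vr {b : E → ℤ} (hb : 0 ≤ b) (v : (E → ℤ) → ℤ) (p : E → ℝ) :
    ∃ y ∈ Box b, util v p y = Vr b v p := by
  obtain ⟨y, hy, hvy⟩ := Finset.exists_mem_eq_sup' (boxF_nonempty hb) (util v p)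
  exact ⟨y, mem_boxF.1 hy, by rw [Vr, dif_pos (boxF_nonempty hb), hvy]⟩

lemma mem_demand_iff {b : E → ℤ} (hb : 0 ≤ b) {v : (E → ℤ) → ℤ} {p : E → ℝ}
    {z : E → ℤ} : z ∈ Demand b v p ↔ z ∈ Box b ∧ util v p z = Vr b v p := by
  constructor
  · rintro ⟨hzb, hopt⟩
    refine ⟨hzb, le_antisymm (util_le_Vr hb v p hzb) ?_⟩
    obtain ⟨y, hy, hvy⟩ := exists_util_eq_Vr hb v p
    rw [← hvy]; exact hopt y hy
  · rintro ⟨hzb, heq⟩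
    exact ⟨hzb, fun y hy => heq ▸ util_le_Vr hb v p hy⟩

noncomputable def demSet (b : E → ℤ) (v : (E → ℤ) → ℤ) (p : E → ℝ) : Finset (E → ℤ) :=
  @Finset.filter _ (fun y => Vr b v p ≤ util v p y) (fun y => Classical.propDecidable _) (boxF b)

lemma mem_demSet {b : E → ℤ} (hb : 0 ≤ b) {v : (E → ℤ) → ℤ} {p : E → ℝ} {z : E → ℤ} :
    z ∈ demSet b v p ↔ z ∈ Demand b v p := by
  rw [demSet, Finset.mem_filter, mem_boxF, mem_demand_iff hb]
  constructor
  · rintro ⟨h1, h2⟩; exact ⟨h1, le_antisymm (util_le_Vr hb v p h1) h2⟩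
  · rintro ⟨h1, h2⟩; exact ⟨h1, h2.ge⟩

lemma demSet_nonempty {b : E → ℤ} (hb : 0 ≤ b) (v : (E → ℤ) → ℤ) (p : E → ℝ) :
    (demSet b v p).Nonempty := by
  obtain ⟨y, hy, hvy⟩ := exists_util_eq_Vr hb v p
  exact ⟨y, Finset.mem_filter.2 ⟨mem_boxF.2 hy, hvy.ge⟩⟩

noncomputable def muMin (b : E → ℤ) (v : (E → ℤ) → ℤ) (p : E → ℝ) (f : E) : ℤ :=
  @dite _ (demSet b v p).Nonempty (Classical.propDecidable _)
    (fun h => (demSet b v p).inf' h (fun y => y f)) (fun _ => 0)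

noncomputable def nuMax (b : E → ℤ) (v : (E → ℤ) → ℤ) (p : E → ℝ) (f : E) : ℤ :=
  @dite _ (demSet b v p).Nonempty (Classical.propDecidable _)
    (fun h => (demSet b v p).sup' h (fun y => y f)) (fun _ => 0)

lemma muMin_spec {b : E → ℤ} (hb : 0 ≤ b) (v : (E → ℤ) → ℤ) (p : E → ℝ) (f : E) :
    (∃ y ∈ demSet b v p, y f = muMin b v p f) ∧ ∀ y ∈ demSet b v p, muMin b v p f ≤ y f := by
  have hne := demSet_nonempty hb v p
  rw [muMin, dif_pos hne]
  constructor
  · obtain ⟨y, hy, hyf⟩ := Finset.exists_mem_eq_inf' hne (fun y => y f)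
    exact ⟨y, hy, hyf.symm⟩
  · intro y hy
    exact Finset.inf'_le _ hy

lemma nuMax_spec {b : E → ℤ} (hb : 0 ≤ b) (v : (E → ℤ) → ℤ) (p : E → ℝ) (f : E) :
    (∃ y ∈ demSet b v p, y f = nuMax b v p f) ∧ ∀ y ∈ demSet b v p, y f ≤ nuMax b v p f := by
  have hne := demSet_nonempty hb v p
  rw [nuMax, dif_pos hne]
  constructor
  · obtain ⟨y, hy, hyf⟩ := Finset.exists_mem_eq_sup' hne (fun y => y f)
    exact ⟨y, hy, hyf.symm⟩
  · intro y hy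
    exact Finset.le_sup' (fun y => y f) hy

lemma chi_apply (f e : E) : chi f e = if e = f then 1 else 0 := rfl

lemma box_sub_chi {b y : E → ℤ} {f : E} (hy : y ∈ Box b) (h1 : 1 ≤ y f) :
    y - chi f ∈ Box b := by
  intro e
  have he := hy e
  rcases eq_or_ne e f with rfl | hne
  · simp only [Pi.sub_apply, chi_apply, if_pos rfl]
    omega
  · simp only [Pi.sub_apply, chi_apply, if_neg hne]
    omega

lemma box_add_chi {b y : E → ℤ} {f : E} (hy : y ∈ Box b) (h1 : y f < b f) :
    y + chi f ∈ Box b := by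
  intro e
  have he := hy e
  rcases eq_or_ne e f with rfl | hne
  · simp only [Pi.add_apply, chi_apply, if_pos rfl]
    omega
  · simp only [Pi.add_apply, chi_apply, if_neg hne]
    omega

lemma box_exch {b y : E → ℤ} {f g : E} (hy : y ∈ Box b) (hfg : g ≠ f)
    (h1 : 1 ≤ y f) (h2 : y g < b g) : y - chi f + chi g ∈ Box b := by
  intro e
  have he := hy e
  rcases eq_or_ne e f with rfl | hne
  · simp only [Pi.add_apply, Pi.sub_apply, chi_apply, if_pos rfl, if_neg (by exact fun h => hfg (by rw [h]) : ¬ (e = g))]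
    omega
  · rcases eq_or_ne e g with rfl | hng
    · simp only [Pi.add_apply, Pi.sub_apply, chi_apply, if_pos rfl, if_neg hne]
      omega
    · simp only [Pi.add_apply, Pi.sub_apply, chi_apply, if_neg hne, if_neg hng]
      omega

lemma box_exch' {b y : E → ℤ} {f g : E} (hy : y ∈ Box b) (hfg : g ≠ f)
    (h1 : y f < b f) (h2 : 1 ≤ y g) : y + chi f - chi g ∈ Box b := by
  intro e
  have he := hy e
  rcases eq_or_ne e f with rfl | hne
  · simp only [Pi.add_apply, Pi.sub_apply, chi_apply, if_pos rfl, if_neg (by exact fun h => hfg (by rw [h]) : ¬ (e = g))]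
    omega
  · rcases eq_or_ne e g with rfl | hng
    · simp only [Pi.add_apply, Pi.sub_apply, chi_apply, if_pos rfl, if_neg hne]
      omega
    · simp only [Pi.add_apply, Pi.sub_apply, chi_apply, if_neg hne, if_neg hng]
      omega

lemma sub_chi_apply_self (y : E → ℤ) (f : E) : (y - chi f) f = y f - 1 := by
  simp [Pi.sub_apply, chi_apply]

lemma add_chi_apply_self (y : E → ℤ) (f : E) : (y + chi f) f = y f + 1 := by
  simp [Pi.add_apply, chi_apply]

lemma exch_apply_self (y : E → ℤ) {f g : E} (hfg : g ≠ f) :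
    (y - chi f + chi g) f = y f - 1 := by
  simp [Pi.add_apply, Pi.sub_apply, chi_apply, if_neg (fun h => hfg (by rw [h]) : ¬ (f = g))]

lemma exch'_apply_self (y : E → ℤ) {f g : E} (hfg : g ≠ f) :
    (y + chi f - chi g) f = y f + 1 := by
  simp [Pi.add_apply, Pi.sub_apply, chi_apply, if_neg (fun h => hfg (by rw [h]) : ¬ (f = g))]

lemma muMin_mono {b : E → ℤ} (hb : 0 ≤ b) {v : (E → ℤ) → ℤ} (hv : MNatConcave b v)
    {p p' : E → ℝ} (hpp : p ≤ p') {f : E} (hf : p f = p' f) :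
    muMin b v p f ≤ muMin b v p' f := by
  by_contra hcon
  push_neg at hcon
  obtain ⟨⟨y, hy, hyf⟩, hymin⟩ := muMin_spec hb v p f
  obtain ⟨⟨w, hw, hwf⟩, -⟩ := muMin_spec hb v p' f
  have hyD : y ∈ Demand b v p := (mem_demSet hb).1 hy
  have hwD : w ∈ Demand b v p' := (mem_demSet hb).1 hw
  have hwyf : w f < y f := by rw [hyf, hwf]; exact hcon
  have hyB := hyD.1
  have hwB := hwD.1
  have hyf1 : 1 ≤ y f := by have := (hwB f).1; omega
  have hwfb : w f < b f := lt_of_lt_of_le hwyf (hyB f).2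
  rcases hv y hyB w hwB f hwyf with hex | ⟨g, hg, hex⟩
  · -- simple exchange
    have hyB' : y - chi f ∈ Box b := box_sub_chi hyB hyf1
    have hwB' : w + chi f ∈ Box b := box_add_chi hwB hwfb
    have h1 : (v (y - chi f) : ℝ) ≤ (v y : ℝ) - p f := by
      have := hyD.2 _ hyB'
      rw [util_eq, util_eq, priceOf_sub, priceOf_chi] at this
      linarith
    have h2 : (v (w + chi f) : ℝ) ≤ (v w : ℝ) + p' f := by
      have := hwD.2 _ hwB'
      rw [util_eq, util_eq, priceOf_add, priceOf_chi] at this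
      linarith
    have hexR : (v y : ℝ) + (v w : ℝ) ≤ (v (y - chi f) : ℝ) + (v (w + chi f) : ℝ) := by
      exact_mod_cast hex
    have heq : util v p (y - chi f) = util v p y := by
      rw [util_eq, util_eq, priceOf_sub, priceOf_chi]
      have := hf
      linarith
    have hmem : y - chi f ∈ demSet b v p :=
      (mem_demSet hb).2 ⟨hyB', fun y' hy' => heq ▸ hyD.2 y' hy'⟩
    have := hymin _ hmem
    rw [sub_chi_apply_self, hyf] at this
    omega
  · -- double exchange
    have hgf : g ≠ f := by intro h; subst h; omega
    have hyB' : y - chi f + chi g ∈ Box b := box_exch hyB hgf hyf1 (lt_of_lt_of_le hg (hwB g).2)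
    have hwB' : w + chi f - chi g ∈ Box b := box_exch' hwB hgf hwfb (by have := (hyB g).1; omega)
    have h1 : (v (y - chi f + chi g) : ℝ) ≤ (v y : ℝ) - p f + p g := by
      have := hyD.2 _ hyB'
      rw [util_eq, util_eq, priceOf_add, priceOf_sub, priceOf_chi, priceOf_chi] at this
      linarith
    have h2 : (v (w + chi f - chi g) : ℝ) ≤ (v w : ℝ) + p' f - p' g := by
      have := hwD.2 _ hwB'
      rw [util_eq, util_eq, priceOf_sub, priceOf_add, priceOf_chi, priceOf_chi] at this
      linarith
    have hexR : (v y : ℝ) + (v w : ℝ) ≤ (v (y - chi f + chi g) : ℝ) + (v (w + chi f - chi g) : ℝ) := by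
      exact_mod_cast hex
    have hpg : p g ≤ p' g := hpp g
    have heq : util v p (y - chi f + chi g) = util v p y := by
      rw [util_eq, util_eq, priceOf_add, priceOf_sub, priceOf_chi, priceOf_chi]
      linarith
    have hmem : y - chi f + chi g ∈ demSet b v p :=
      (mem_demSet hb).2 ⟨hyB', fun y' hy' => heq ▸ hyD.2 y' hy'⟩
    have := hymin _ hmem
    rw [exch_apply_self y hgf, hyf] at this
    omega

lemma nuMax_mono {b : E → ℤ} (hb : 0 ≤ b) {v : (E → ℤ) → ℤ} (hv : MNatConcave b v)
    {p p' : E → ℝ} (hpp : p ≤ p') {f : E} (hf : p f = p' f) :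
    nuMax b v p f ≤ nuMax b v p' f := by
  by_contra hcon
  push_neg at hcon
  obtain ⟨⟨y, hy, hyf⟩, -⟩ := nuMax_spec hb v p f
  obtain ⟨⟨w, hw, hwf⟩, hwmax⟩ := nuMax_spec hb v p' f
  have hyD : y ∈ Demand b v p := (mem_demSet hb).1 hy
  have hwD : w ∈ Demand b v p' := (mem_demSet hb).1 hw
  have hwyf : w f < y f := by rw [hyf, hwf]; exact hcon
  have hyB := hyD.1
  have hwB := hwD.1
  have hyf1 : 1 ≤ y f := by have := (hwB f).1; omega
  have hwfb : w f < b f := lt_of_lt_of_le hwyf (hyB f).2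
  rcases hv y hyB w hwB f hwyf with hex | ⟨g, hg, hex⟩
  · have hyB' : y - chi f ∈ Box b := box_sub_chi hyB hyf1
    have hwB' : w + chi f ∈ Box b := box_add_chi hwB hwfb
    have h1 : (v (y - chi f) : ℝ) ≤ (v y : ℝ) - p f := by
      have := hyD.2 _ hyB'
      rw [util_eq, util_eq, priceOf_sub, priceOf_chi] at this
      linarith
    have h2 : (v (w + chi f) : ℝ) ≤ (v w : ℝ) + p' f := by
      have := hwD.2 _ hwB'
      rw [util_eq, util_eq, priceOf_add, priceOf_chi] at this
      linarith
    have hexR : (v y : ℝ) + (v w : ℝ) ≤ (v (y - chi f) : ℝ) + (v (w + chi f) : ℝ) := by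
      exact_mod_cast hex
    have heq : util v p' (w + chi f) = util v p' w := by
      rw [util_eq, util_eq, priceOf_add, priceOf_chi]
      have := hf
      linarith
    have hmem : w + chi f ∈ demSet b v p' :=
      (mem_demSet hb).2 ⟨hwB', fun y' hy' => heq ▸ hwD.2 y' hy'⟩
    have := hwmax _ hmem
    rw [add_chi_apply_self, hwf] at this
    omega
  · have hgf : g ≠ f := by intro h; subst h; omega
    have hyB' : y - chi f + chi g ∈ Box b := box_exch hyB hgf hyf1 (lt_of_lt_of_le hg (hwB g).2)
    have hwB' : w + chi f - chi g ∈ Box b := box_exch' hwB hgf hwfb (by have := (hyB g).1; omega)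
    have h1 : (v (y - chi f + chi g) : ℝ) ≤ (v y : ℝ) - p f + p g := by
      have := hyD.2 _ hyB'
      rw [util_eq, util_eq, priceOf_add, priceOf_sub, priceOf_chi, priceOf_chi] at this
      linarith
    have h2 : (v (w + chi f - chi g) : ℝ) ≤ (v w : ℝ) + p' f - p' g := by
      have := hwD.2 _ hwB'
      rw [util_eq, util_eq, priceOf_sub, priceOf_add, priceOf_chi, priceOf_chi] at this
      linarith
    have hexR : (v y : ℝ) + (v w : ℝ) ≤ (v (y - chi f + chi g) : ℝ) + (v (w + chi f - chi g) : ℝ) := by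
      exact_mod_cast hex
    have hpg : p g ≤ p' g := hpp g
    have heq : util v p' (w + chi f - chi g) = util v p' w := by
      rw [util_eq, util_eq, priceOf_sub, priceOf_add, priceOf_chi, priceOf_chi]
      linarith
    have hmem : w + chi f - chi g ∈ demSet b v p' :=
      (mem_demSet hb).2 ⟨hwB', fun y' hy' => heq ▸ hwD.2 y' hy'⟩
    have := hwmax _ hmem
    rw [exch'_apply_self w hgf, hwf] at this
    omega

noncomputable def shiftP (p : E → ℝ) (t : ℝ) (f : E) : E → ℝ :=
  fun e => if e = f then p e + t else p e

lemma shiftP_zero (p : E → ℝ) (f : E) : shiftP p 0 f = p := by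
  funext e; simp [shiftP]

lemma shiftP_shiftP (p : E → ℝ) (t s : ℝ) (f : E) :
    shiftP (shiftP p t f) s f = shiftP p (t + s) f := by
  funext e
  simp only [shiftP]
  split <;> ring

lemma shiftP_mono {p p' : E → ℝ} (h : p ≤ p') (t : ℝ) (f : E) :
    shiftP p t f ≤ shiftP p' t f := by
  intro e
  simp only [shiftP]
  split
  · linarith [h e]
  · exact h e

lemma shiftP_f {p : E → ℝ} (t : ℝ) (f : E) : shiftP p t f f = p f + t := by
  simp [shiftP]

lemma priceOf_shiftP (p : E → ℝ) (t : ℝ) (f : E) (y : E → ℤ) :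
    priceOf (shiftP p t f) y = priceOf p y + t * (y f : ℝ) := by
  unfold priceOf shiftP
  rw [Finset.sum_congr rfl (fun e _ => (by split <;> ring :
    (if e = f then p e + t else p e) * (y e : ℝ) = p e * (y e : ℝ) + (if e = f then t * (y e : ℝ) else 0))),
    Finset.sum_add_distrib, Finset.sum_ite_eq' Finset.univ f (fun e => t * (y e : ℝ))]
  simp

lemma util_shiftP (v : (E → ℤ) → ℤ) (p : E → ℝ) (t : ℝ) (f : E) (y : E → ℤ) :
    util v (shiftP p t f) y = util v p y - t * (y f : ℝ) := by
  rw [util_eq, util_eq, priceOf_shiftP]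
  ring

lemma right_window {b : E → ℤ} (hb : 0 ≤ b) (v : (E → ℤ) → ℤ) (p : E → ℝ) (f : E) :
    ∃ t0 : ℝ, 0 < t0 ∧ ∀ t : ℝ, 0 ≤ t → t ≤ t0 →
      Vr b v (shiftP p t f) = Vr b v p - t * (muMin b v p f : ℝ) := by
  classical
  obtain ⟨⟨ym, hym, hymf⟩, hmin⟩ := muMin_spec hb v p f
  set μ := muMin b v p f with hμ
  set V0 := Vr b v p with hV0
  set C := (boxF b).filter (fun y => y f < μ) with hC
  set gap : (E → ℤ) → ℝ := fun y => (V0 - util v p y) / ((μ : ℝ) - (y f : ℝ)) with hgap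
  have hCpos : ∀ y ∈ C, 0 < gap y := by
    intro y hy
    rw [Finset.mem_filter] at hy
    have hnd : y ∉ demSet b v p := fun hyd => absurd (hmin y hyd) (by omega)
    have hub : util v p y < V0 := by
      rcases lt_or_ge (util v p y) V0 with h | h
      · exact h
      · exact absurd (Finset.mem_filter.2 ⟨hy.1, h⟩) hnd
    have : (0:ℝ) < (μ : ℝ) - (y f : ℝ) := by
      have : y f < μ := hy.2
      have : ((y f : ℝ)) < (μ : ℝ) := by exact_mod_cast this
      linarith
    exact div_pos (by linarith) this
  set t0 := if hCne : C.Nonempty then C.inf' hCne gap else 1 with ht0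
  have ht0pos : 0 < t0 := by
    rw [ht0]
    split
    · rename_i hCne
      exact (Finset.lt_inf'_iff hCne).2 (fun y hy => hCpos y hy)
    · exact one_pos
  have ht0le : ∀ y ∈ C, t0 ≤ gap y := by
    intro y hy
    rw [ht0, dif_pos ⟨y, hy⟩]
    exact Finset.inf'_le gap hy
  refine ⟨t0, ht0pos, fun t ht htt0 => ?_⟩
  have hymD : ym ∈ Demand b v p := (mem_demSet hb).1 hym
  have hVym : util v p ym = V0 := ((mem_demand_iff hb).1 hymD).2
  apply le_antisymm
  · rw [Vr, dif_pos (boxF_nonempty hb)]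
    apply Finset.sup'_le
    intro y hyB
    rw [util_shiftP]
    rcases le_or_gt μ (y f) with hge | hlt
    · have hu : util v p y ≤ V0 := util_le_Vr hb v p (mem_boxF.1 hyB)
      have hcast : (μ : ℝ) ≤ (y f : ℝ) := by exact_mod_cast hge
      nlinarith
    · have hyC : y ∈ C := Finset.mem_filter.2 ⟨hyB, hlt⟩
      have h1 : t ≤ gap y := le_trans htt0 (ht0le y hyC)
      have hpos : (0:ℝ) < (μ : ℝ) - (y f : ℝ) := by
        have : ((y f : ℝ)) < (μ : ℝ) := by exact_mod_cast hlt
        linarith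
      rw [hgap, le_div_iff₀ hpos] at h1
      
      linarith
  · have hcalc : util v (shiftP p t f) ym = V0 - t * (μ : ℝ) := by
      rw [util_shiftP, hVym, hymf]
    calc V0 - t * (μ : ℝ) = util v (shiftP p t f) ym := hcalc.symm
    _ ≤ Vr b v (shiftP p t f) := util_le_Vr hb v _ hymD.1

lemma left_window {b : E → ℤ} (hb : 0 ≤ b) (v : (E → ℤ) → ℤ) (p : E → ℝ) (f : E) :
    ∃ t0 : ℝ, 0 < t0 ∧ ∀ t : ℝ, 0 ≤ t → t ≤ t0 →
      Vr b v (shiftP p (-t) f) = Vr b v p + t * (nuMax b v p f : ℝ) := by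
  classical
  obtain ⟨⟨ym, hym, hymf⟩, hmax⟩ := nuMax_spec hb v p f
  set ν := nuMax b v p f with hν
  set V0 := Vr b v p with hV0
  set C := (boxF b).filter (fun y => ν < y f) with hC
  set gap : (E → ℤ) → ℝ := fun y => (V0 - util v p y) / ((y f : ℝ) - (ν : ℝ)) with hgap
  have hCpos : ∀ y ∈ C, 0 < gap y := by
    intro y hy
    rw [Finset.mem_filter] at hy
    have hnd : y ∉ demSet b v p := fun hyd => absurd (hmax y hyd) (by omega)
    have hub : util v p y < V0 := by
      rcases lt_or_ge (util v p y) V0 with h | h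
      · exact h
      · exact absurd (Finset.mem_filter.2 ⟨hy.1, h⟩) hnd
    have : (0:ℝ) < (y f : ℝ) - (ν : ℝ) := by
      have : ν < y f := hy.2
      have : (ν : ℝ) < ((y f : ℝ)) := by exact_mod_cast this
      linarith
    exact div_pos (by linarith) this
  set t0 := if hCne : C.Nonempty then C.inf' hCne gap else 1 with ht0
  have ht0pos : 0 < t0 := by
    rw [ht0]
    split
    · rename_i hCne
      exact (Finset.lt_inf'_iff hCne).2 (fun y hy => hCpos y hy)
    · exact one_pos
  have ht0le : ∀ y ∈ C, t0 ≤ gap y := by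
    intro y hy
    rw [ht0, dif_pos ⟨y, hy⟩]
    exact Finset.inf'_le gap hy
  refine ⟨t0, ht0pos, fun t ht htt0 => ?_⟩
  have hymD : ym ∈ Demand b v p := (mem_demSet hb).1 hym
  have hVym : util v p ym = V0 := ((mem_demand_iff hb).1 hymD).2
  apply le_antisymm
  · rw [Vr, dif_pos (boxF_nonempty hb)]
    apply Finset.sup'_le
    intro y hyB
    rw [util_shiftP]
    rcases le_or_gt (y f) ν with hge | hlt
    · have hu : util v p y ≤ V0 := util_le_Vr hb v p (mem_boxF.1 hyB)
      have hcast : ((y f : ℝ)) ≤ (ν : ℝ) := by exact_mod_cast hge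
      nlinarith
    · have hyC : y ∈ C := Finset.mem_filter.2 ⟨hyB, hlt⟩
      have h1 : t ≤ gap y := le_trans htt0 (ht0le y hyC)
      have hpos : (0:ℝ) < (y f : ℝ) - (ν : ℝ) := by
        have : (ν : ℝ) < ((y f : ℝ)) := by exact_mod_cast hlt
        linarith
      rw [hgap, le_div_iff₀ hpos] at h1
      
      linarith
  · have hcalc : util v (shiftP p (-t) f) ym = V0 + t * (ν : ℝ) := by
      rw [util_shiftP, hVym, hymf]
      ring
    calc V0 + t * (ν : ℝ) = util v (shiftP p (-t) f) ym := hcalc.symm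
    _ ≤ Vr b v (shiftP p (-t) f) := util_le_Vr hb v _ hymD.1

lemma mono_of_local {K : ℝ → ℝ}
    (right : ∀ t, ∃ ε, 0 < ε ∧ ∀ s, 0 ≤ s → s ≤ ε → K t ≤ K (t + s))
    (left : ∀ t, ∃ ε, 0 < ε ∧ ∀ s, 0 ≤ s → s ≤ ε → K (t - s) ≤ K t)
    {a c : ℝ} (hac : a ≤ c) : K a ≤ K c := by
  set T := {t : ℝ | t ∈ Set.Icc a c ∧ ∀ s ∈ Set.Icc a t, K a ≤ K s} with hT
  have haT : a ∈ T := ⟨⟨le_refl a, hac⟩, fun s hs => by rw [le_antisymm hs.2 hs.1]⟩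
  have hbdd : BddAbove T := ⟨c, fun t ht => ht.1.2⟩
  have hTne : T.Nonempty := ⟨a, haT⟩
  set u := sSup T with hu
  have hau : a ≤ u := le_csSup hbdd haT
  have huc : u ≤ c := csSup_le hTne (fun t ht => ht.1.2)
  have hltu : ∀ s, a ≤ s → s < u → K a ≤ K s := by
    intro s hs hsu
    obtain ⟨t, htT, hst⟩ := exists_lt_of_lt_csSup hTne hsu
    exact htT.2 s ⟨hs, le_of_lt hst⟩
  have hKu : K a ≤ K u := by
    rcases eq_or_lt_of_le hau with heq | hlt'
    · rw [← heq]
    · obtain ⟨ε, hε, hL⟩ := left u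
      have hε'pos : 0 < min ε (u - a) := lt_min hε (by linarith)
      obtain ⟨t, htT, hst⟩ := exists_lt_of_lt_csSup hTne
        (show u - min ε (u - a) < u by linarith)
      have htu : t ≤ u := le_csSup hbdd htT
      have h1 : K (u - (u - t)) ≤ K u := by
        refine hL (u - t) (by linarith) ?_
        have := min_le_left ε (u - a)
        linarith
      have h2 : K a ≤ K t := htT.2 t ⟨htT.1.1, le_refl t⟩
      have heq2 : u - (u - t) = t := by ring
      rw [heq2] at h1
      linarith
  have huT : u ∈ T := by
    refine ⟨⟨hau, huc⟩, fun s hs => ?_⟩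
    rcases eq_or_lt_of_le hs.2 with heq | hlt'
    · rw [heq]; exact hKu
    · exact hltu s hs.1 hlt'
  have hueq : u = c := by
    by_contra hne
    have hucl : u < c := lt_of_le_of_ne huc hne
    obtain ⟨ε, hε, hR⟩ := right u
    have ht'T : min (u + ε) c ∈ T := by
      refine ⟨⟨le_trans hau (le_min (by linarith) (le_of_lt hucl)), min_le_right _ _⟩, ?_⟩
      intro s hs
      rcases le_or_gt s u with hle | hgt
      · exact huT.2 s ⟨hs.1, hle⟩
      · have hstep : K u ≤ K (u + (s - u)) := by
          refine hR (s - u) (by linarith) ?_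
          have h1 : s ≤ min (u + ε) c := hs.2
          have h2 : min (u + ε) c ≤ u + ε := min_le_left _ _
          linarith
        have heq : u + (s - u) = s := by ring
        rw [heq] at hstep
        linarith
    have h1 : min (u + ε) c ≤ u := le_csSup hbdd ht'T
    have h2 : u < min (u + ε) c := lt_min (by linarith) hucl
    linarith
  rw [← hueq]
  exact hKu

lemma pairwise_submod {b : E → ℤ} (hb : 0 ≤ b) {v : (E → ℤ) → ℤ} (hv : MNatConcave b v)
    {p p' : E → ℝ} (hpp : p ≤ p') {f : E} (hf : p f = p' f) {δ : ℝ} (hδ : 0 ≤ δ) :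
    Vr b v (shiftP p' δ f) - Vr b v p' ≤ Vr b v (shiftP p δ f) - Vr b v p := by
  have key : ∀ t1 t2 : ℝ, t1 ≤ t2 →
      Vr b v (shiftP p t1 f) - Vr b v (shiftP p' t1 f) ≤
      Vr b v (shiftP p t2 f) - Vr b v (shiftP p' t2 f) := by
    have hmono_t : ∀ t : ℝ, shiftP p t f ≤ shiftP p' t f := fun t => shiftP_mono hpp t f
    have hf_t : ∀ t : ℝ, shiftP p t f f = shiftP p' t f f := fun t => by
      rw [shiftP_f, shiftP_f, hf]
    intro t1 t2 h12
    refine mono_of_local (K := fun t => Vr b v (shiftP p t f) - Vr b v (shiftP p' t f))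
      ?_ ?_ h12
    · intro t
      obtain ⟨ε1, hε1, hw1⟩ := right_window hb v (shiftP p t f) f
      obtain ⟨ε2, hε2, hw2⟩ := right_window hb v (shiftP p' t f) f
      refine ⟨min ε1 ε2, lt_min hε1 hε2, fun s hs hsle => ?_⟩
      have e1 := hw1 s hs (le_trans hsle (min_le_left _ _))
      have e2 := hw2 s hs (le_trans hsle (min_le_right _ _))
      rw [shiftP_shiftP] at e1 e2
      have hμ : muMin b v (shiftP p t f) f ≤ muMin b v (shiftP p' t f) f :=
        muMin_mono hb hv (hmono_t t) (hf_t t)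
      have hμR : (muMin b v (shiftP p t f) f : ℝ) ≤ (muMin b v (shiftP p' t f) f : ℝ) := by
        exact_mod_cast hμ
      rw [e1, e2]
      nlinarith
    · intro t
      obtain ⟨ε1, hε1, hw1⟩ := left_window hb v (shiftP p t f) f
      obtain ⟨ε2, hε2, hw2⟩ := left_window hb v (shiftP p' t f) f
      refine ⟨min ε1 ε2, lt_min hε1 hε2, fun s hs hsle => ?_⟩
      have e1 := hw1 s hs (le_trans hsle (min_le_left _ _))
      have e2 := hw2 s hs (le_trans hsle (min_le_right _ _))
      rw [shiftP_shiftP] at e1 e2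
      have hν : nuMax b v (shiftP p t f) f ≤ nuMax b v (shiftP p' t f) f :=
        nuMax_mono hb hv (hmono_t t) (hf_t t)
      have hνR : (nuMax b v (shiftP p t f) f : ℝ) ≤ (nuMax b v (shiftP p' t f) f : ℝ) := by
        exact_mod_cast hν
      rw [sub_eq_add_neg t s, e1, e2]
      nlinarith
  have h2 := key 0 δ hδ
  rw [shiftP_zero p f, shiftP_zero p' f] at h2
  linarith

lemma superadd {b : E → ℤ} (hb : 0 ≤ b) {v : (E → ℤ) → ℤ} (hv : MNatConcave b v) (p : E → ℝ) :
    ∀ (s : Finset E) (c d : E → ℝ), 0 ≤ c → 0 ≤ d → (∀ e, d e ≠ 0 → e ∈ s) →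
      (∀ e, d e ≠ 0 → c e = 0) →
      Vr b v (p + c + d) + Vr b v p ≤ Vr b v (p + c) + Vr b v (p + d) := by
  intro s
  induction s using Finset.induction_on with
  | empty =>
    intro c d hc hd hsupp hdis
    have hd0 : d = 0 := funext fun e => by
      by_contra h
      exact (Finset.notMem_empty e) (hsupp e h)
    rw [hd0, add_zero, add_zero]
  | insert g s hg ih =>
    intro c d hc hd hsupp hdis
    by_cases hdg : d g = 0
    · refine ih c d hc hd (fun e he => ?_) hdis
      rcases Finset.mem_insert.1 (hsupp e he) with rfl | h
      · exact absurd hdg he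
      · exact h
    · set d' := Function.update d g 0 with hd'
      have hd'0 : 0 ≤ d' := by
        intro e
        rcases eq_or_ne e g with rfl | hne
        · simp [hd']
        · simp only [hd', Function.update_of_ne hne]
          exact hd e
      have hcg : c g = 0 := hdis g hdg
      have hP : p + d' ≤ p + d' + c := by
        intro e
        have := hc e
        simp only [Pi.zero_apply] at this
        simp only [Pi.add_apply]
        linarith
      have hPg : (p + d') g = (p + d' + c) g := by
        simp [hcg]
      have hL4 := pairwise_submod hb hv hP hPg (show (0:ℝ) ≤ d g from hd g)
      have e1 : shiftP (p + d' + c) (d g) g = p + c + d := by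
        funext e
        rcases eq_or_ne e g with rfl | hne
        · simp [shiftP, hd', hcg]
        · simp only [shiftP, if_neg hne, Pi.add_apply, hd', Function.update_of_ne hne]
          ring
      have e2 : shiftP (p + d') (d g) g = p + d := by
        funext e
        rcases eq_or_ne e g with rfl | hne
        · simp [shiftP, hd']
        · simp only [shiftP, if_neg hne, Pi.add_apply, hd', Function.update_of_ne hne]
      rw [e1, e2] at hL4
      have hcomm : p + d' + c = p + c + d' := by
        rw [add_right_comm]
      rw [hcomm] at hL4
      have ihd := ih c d' hc hd'0 (fun e he => by
        have hne : e ≠ g := by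
          intro h
          rw [h] at he
          simp [hd'] at he
        rcases Finset.mem_insert.1 (hsupp e (by
          rw [hd', Function.update_of_ne hne] at he
          exact he)) with h | h
        · exact absurd h hne
        · exact h) (fun e he => by
        have hne : e ≠ g := by
          intro h
          rw [h] at he
          simp [hd'] at he
        rw [hd', Function.update_of_ne hne] at he
        exact hdis e he)
      linarith

lemma Vr_submodular {b : E → ℤ} (hb : 0 ≤ b) {v : (E → ℤ) → ℤ} (hv : MNatConcave b v)
    (P Q : E → ℝ) :
    Vr b v (fun e => min (P e) (Q e)) + Vr b v (fun e => max (P e) (Q e)) ≤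
      Vr b v P + Vr b v Q := by
  set m : E → ℝ := fun e => min (P e) (Q e) with hm
  set c : E → ℝ := fun e => Q e - m e with hc
  set d : E → ℝ := fun e => P e - m e with hd
  have hc0 : 0 ≤ c := by
    intro e
    simp only [hc, hm, Pi.zero_apply]
    have := min_le_right (P e) (Q e)
    linarith
  have hd0 : 0 ≤ d := by
    intro e
    simp only [hd, hm, Pi.zero_apply]
    have := min_le_left (P e) (Q e)
    linarith
  have hdis : ∀ e, d e ≠ 0 → c e = 0 := by
    intro e he
    simp only [hd, hm] at he
    simp only [hc, hm]
    rcases le_total (P e) (Q e) with h | h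
    · rw [min_eq_left h] at he
      simp at he
    · rw [min_eq_right h]
      ring
  have key := superadd hb hv m Finset.univ c d hc0 hd0 (fun e _ => Finset.mem_univ e) hdis
  have e1 : m + c = Q := by
    funext e
    simp only [Pi.add_apply, hc]
    ring
  have e2 : m + d = P := by
    funext e
    simp only [Pi.add_apply, hd]
    ring
  have e3 : m + c + d = fun e => max (P e) (Q e) := by
    funext e
    simp only [Pi.add_apply, hc, hd, hm]
    have := min_add_max (P e) (Q e)
    linarith
  rw [e3, e1, e2] at key
  linarith

lemma priceOf_split (P Q : E → ℝ) (y : E → ℤ) :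
    priceOf P y = priceOf Q y + ∑ e, (P e - Q e) * (y e : ℝ) := by
  unfold priceOf
  rw [← Finset.sum_add_distrib]
  exact Finset.sum_congr rfl fun e _ => by ring

end SW15

open SW15

/-- If `p*` is the minimal Walrasian price vector and `q` a packing price vector
with packing allocation `z`, then `p*(e) ≤ q(e)` for every item `e` that is at
least partially sold in the allocation. -/
theorem stmt15 {N : Type*} [Fintype N] (b : E → ℤ) (hb : 0 ≤ b)
    (v : N → (E → ℤ) → ℤ) (hsgs : ∀ i, MNatConcave b (v i))
    (hmono : ∀ i, ∀ x ∈ Box b, ∀ y ∈ Box b, x ≤ y → v i x ≤ v i y)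
    (pstar : E → ℝ) (hps : 0 ≤ pstar)
    (hW : Walrasian b v pstar)
    (hmin : ∀ p : E → ℝ, 0 ≤ p → Walrasian b v p → pstar ≤ p)
    (q : E → ℝ) (hq : 0 ≤ q)
    (z : N → E → ℤ) (hz : ∀ i, z i ∈ Demand b (v i) q)
    (hpack : ∀ e, ∑ i, z i e ≤ b e) :
    ∀ e : E, 0 < ∑ i, z i e → pstar e ≤ q e := by
  intro e0 _
  obtain ⟨x, hx, hxb⟩ := hW
  set m : E → ℝ := fun e => min (pstar e) (q e) with hm
  set u : E → ℝ := fun e => max (pstar e) (q e) with hu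
  have hzB : ∀ i, z i ∈ Box b := fun i => (hz i).1
  have hxB : ∀ i, x i ∈ Box b := fun i => (hx i).1
  have hVq : ∀ i, util (v i) q (z i) = Vr b (v i) q := fun i =>
    ((mem_demand_iff hb).1 (hz i)).2
  have hVp : ∀ i, util (v i) pstar (x i) = Vr b (v i) pstar := fun i =>
    ((mem_demand_iff hb).1 (hx i)).2
  -- submodularity, summed over buyers
  have hsub : (∑ i, Vr b (v i) m) + (∑ i, Vr b (v i) u) ≤
      (∑ i, Vr b (v i) pstar) + (∑ i, Vr b (v i) q) := by
    rw [← Finset.sum_add_distrib, ← Finset.sum_add_distrib]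
    exact Finset.sum_le_sum fun i _ => Vr_submodular hb (hsgs i) pstar q
  -- lower bound for V at u via the packing allocation z
  have hU : ∀ i, Vr b (v i) q - ∑ e, (u e - q e) * (z i e : ℝ) ≤ Vr b (v i) u := by
    intro i
    have h1 : util (v i) u (z i) ≤ Vr b (v i) u := util_le_Vr hb _ _ (hzB i)
    have h2 : util (v i) u (z i) =
        util (v i) q (z i) - ∑ e, (u e - q e) * (z i e : ℝ) := by
      rw [util_eq, util_eq, priceOf_split u q (z i)]
      ring
    rw [hVq i] at h2
    linarith
  -- lower bound for V at m via the Walrasian allocation x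
  have hMx : ∀ i, util (v i) m (x i) =
      Vr b (v i) pstar + ∑ e, (pstar e - m e) * (x i e : ℝ) := by
    intro i
    rw [util_eq, priceOf_split m pstar (x i), ← hVp i, util_eq]
    have hneg : ∑ e, (m e - pstar e) * (x i e : ℝ) = -∑ e, (pstar e - m e) * (x i e : ℝ) := by
      rw [← Finset.sum_neg_distrib]
      exact Finset.sum_congr rfl fun e _ => by ring
    rw [hneg]
    ring
  have hM : ∀ i, Vr b (v i) pstar + ∑ e, (pstar e - m e) * (x i e : ℝ) ≤ Vr b (v i) m := by
    intro i
    rw [← hMx i]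
    exact util_le_Vr hb _ _ (hxB i)
  -- aggregate the coordinatewise sums
  have hswapz : ∑ i, ∑ e, (u e - q e) * (z i e : ℝ) =
      ∑ e, (u e - q e) * ((∑ i, z i e : ℤ) : ℝ) := by
    rw [Finset.sum_comm]
    exact Finset.sum_congr rfl fun e _ => by
      rw [← Finset.mul_sum]
      push_cast
      ring
  have hswapx : ∑ i, ∑ e, (pstar e - m e) * (x i e : ℝ) =
      ∑ e, (pstar e - m e) * ((b e : ℤ) : ℝ) := by
    rw [Finset.sum_comm]
    exact Finset.sum_congr rfl fun e _ => by
      rw [← Finset.mul_sum, ← hxb e]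
      push_cast
      ring
  have hcoeff : ∀ e, u e - q e = pstar e - m e := by
    intro e
    simp only [hu, hm]
    rcases le_total (pstar e) (q e) with h | h
    · rw [max_eq_right h, min_eq_left h]
      ring
    · rw [max_eq_left h, min_eq_right h]
  have hbound : ∑ e, (u e - q e) * ((∑ i, z i e : ℤ) : ℝ) ≤
      ∑ e, (pstar e - m e) * ((b e : ℤ) : ℝ) := by
    refine Finset.sum_le_sum fun e _ => ?_
    rw [← hcoeff e]
    have h1 : (0:ℝ) ≤ u e - q e := by
      simp only [hu]
      have := le_max_right (pstar e) (q e)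
      linarith
    have h2 : ((∑ i, z i e : ℤ) : ℝ) ≤ ((b e : ℤ) : ℝ) := by
      exact_mod_cast hpack e
    nlinarith
  -- chain of inequalities
  have hUsum : (∑ i, Vr b (v i) q) - ∑ e, (u e - q e) * ((∑ i, z i e : ℤ) : ℝ) ≤
      ∑ i, Vr b (v i) u := by
    have := Finset.sum_le_sum (fun i (_ : i ∈ Finset.univ) => hU i)
    rw [Finset.sum_sub_distrib, hswapz] at this
    linarith
  have hMsum : (∑ i, Vr b (v i) pstar) + ∑ e, (pstar e - m e) * ((b e : ℤ) : ℝ) ≤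
      ∑ i, Vr b (v i) m := by
    have := Finset.sum_le_sum (fun i (_ : i ∈ Finset.univ) => hM i)
    rw [Finset.sum_add_distrib, hswapx] at this
    linarith
  -- all x i are demanded at m
  have hsum0 : ∑ i, (Vr b (v i) m - util (v i) m (x i)) = 0 := by
    have hxsum : ∑ i, util (v i) m (x i) =
        (∑ i, Vr b (v i) pstar) + ∑ e, (pstar e - m e) * ((b e : ℤ) : ℝ) := by
      rw [Finset.sum_congr rfl fun i (_ : i ∈ Finset.univ) => hMx i,
        Finset.sum_add_distrib, hswapx]
    rw [Finset.sum_sub_distrib, hxsum]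
    have : ∑ i, Vr b (v i) m ≤
        (∑ i, Vr b (v i) pstar) + ∑ e, (pstar e - m e) * ((b e : ℤ) : ℝ) := by
      linarith
    linarith
  have hall : ∀ i, util (v i) m (x i) = Vr b (v i) m := by
    intro i
    have hnn : ∀ i ∈ Finset.univ, (0:ℝ) ≤ Vr b (v i) m - util (v i) m (x i) :=
      fun i _ => by linarith [util_le_Vr hb (v i) m (hxB i)]
    have := (Finset.sum_eq_zero_iff_of_nonneg hnn).1 hsum0 i (Finset.mem_univ i)
    linarith
  have hWm : Walrasian b v m :=
    ⟨x, fun i => (mem_demand_iff hb).2 ⟨hxB i, hall i⟩, hxb⟩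
  have hm0 : (0:E → ℝ) ≤ m := fun e => le_min (hps e) (hq e)
  exact le_trans (hmin m hm0 hWm e0) (min_le_right _ _)
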